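/- Let α > d/2 and define K_α(x) = (1/(Γ(α)(4π)^{d/2})) ∫₀^∞ t^{α - d/2 - 1} e^{-|x|²/(4t) - t} dt for x ∈ ℝ^d. Then there exist positive constants c, C depending only on α and d such that c e^{-|x|²/4} ≤ K_α(x) ≤ C e^{-|x|/8} for all x ∈ ℝ^d. -/

import Mathlib

open MeasureTheory

/-- The kernel of the operator `(1-Δ)^{-α}` on `ℝ^d`. -/
noncomputable def Kker (d : ℕ) (α : ℝ) (x : EuclideanSpace ℝ (Fin d)) : ℝ :=
  (1 / (Real.Gamma α * (4 * Real.pi) ^ ((d : ℝ) / 2))) *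
    ∫ t in Set.Ioi (0:ℝ), t ^ (α - (d : ℝ) / 2 - 1) * Real.exp (-‖x‖ ^ 2 / (4 * t) - t)

theorem stmt3 (d : ℕ) (hd : 1 ≤ d) (α : ℝ) (hα : (d : ℝ) / 2 < α) :
    ∃ c C : ℝ, 0 < c ∧ 0 < C ∧ ∀ x : EuclideanSpace ℝ (Fin d),
      c * Real.exp (-‖x‖ ^ 2 / 4) ≤ Kker d α x ∧
      Kker d α x ≤ C * Real.exp (-‖x‖ / 8) := by
  set s : ℝ := α - (d : ℝ) / 2 - 1 with hsdef
  have hs1 : -1 < s := by simp only [hsdef]; linarith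
  have hα0 : 0 < α := lt_of_le_of_lt (by positivity) hα
  set A : ℝ := 1 / (Real.Gamma α * (4 * Real.pi) ^ ((d : ℝ) / 2)) with hAdef
  have hA : 0 < A := by
    have h1 := Real.Gamma_pos_of_pos hα0
    have h2 : (0:ℝ) < (4 * Real.pi) ^ ((d : ℝ) / 2) :=
      Real.rpow_pos_of_pos (by positivity) _
    positivity
  -- integrability of the comparison functions
  have hI1 : ∀ b : ℝ, 0 < b →
      IntegrableOn (fun t : ℝ => t ^ s * Real.exp (-(b * t))) (Set.Ioi 0) := by
    intro b hb
    have := integrableOn_rpow_mul_exp_neg_mul_rpow hs1 zero_lt_one hb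
    simpa [Real.rpow_one] using this
  -- measurability
  have hgm : ∀ a : ℝ, AEStronglyMeasurable
      (fun t : ℝ => t ^ s * Real.exp (-a / (4 * t) - t))
      (volume.restrict (Set.Ioi 0)) := by
    intro a
    apply Measurable.aestronglyMeasurable
    fun_prop
  -- integrability of the integrand
  have hgint : ∀ x : EuclideanSpace ℝ (Fin d), IntegrableOn
      (fun t : ℝ => t ^ s * Real.exp (-‖x‖ ^ 2 / (4 * t) - t)) (Set.Ioi 0) := by
    intro x
    refine (hI1 1 one_pos).mono' (hgm _) ?_
    filter_upwards [self_mem_ae_restrict measurableSet_Ioi] with t ht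
    have ht0 : (0:ℝ) < t := ht
    rw [Real.norm_eq_abs, abs_of_nonneg (by positivity)]
    have : -‖x‖ ^ 2 / (4 * t) - t ≤ -(1 * t) := by
      have : 0 ≤ ‖x‖ ^ 2 / (4 * t) := by positivity
      have hne : -‖x‖ ^ 2 / (4 * t) = -(‖x‖ ^ 2 / (4 * t)) := by ring
      rw [hne]; linarith
    have hrp : (0:ℝ) ≤ t ^ s := Real.rpow_nonneg ht0.le _
    exact mul_le_mul_of_nonneg_left (Real.exp_le_exp.2 this) hrp
  set I2 : ℝ := ∫ t in Set.Ioi (0:ℝ), t ^ s * Real.exp (-(1/2 * t)) with hI2def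
  have hI2nn : 0 ≤ I2 := by
    rw [hI2def]
    apply setIntegral_nonneg measurableSet_Ioi
    intro t ht
    have : (0:ℝ) < t := ht
    positivity
  -- upper bound for the integral
  have hupper : ∀ x : EuclideanSpace ℝ (Fin d),
      (∫ t in Set.Ioi (0:ℝ), t ^ s * Real.exp (-‖x‖ ^ 2 / (4 * t) - t)) ≤
        Real.exp (-‖x‖ / 2) * I2 := by
    intro x
    rw [hI2def, ← integral_const_mul]
    apply setIntegral_mono_on (hgint x) (((hI1 (1/2) (by norm_num)).const_mul _))
      measurableSet_Ioi
    intro t ht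
    have ht0 : (0:ℝ) < t := ht
    have hx0 : (0:ℝ) ≤ ‖x‖ := norm_nonneg x
    have key : ‖x‖ * (4 * t) ≤ (‖x‖ ^ 2 / (4 * t) + t) * (4 * t) := by
      have h1 : ‖x‖ ^ 2 / (4 * t) * (4 * t) = ‖x‖ ^ 2 := by
        field_simp
      nlinarith [sq_nonneg (‖x‖ - 2 * t)]
    have key2 : ‖x‖ ≤ ‖x‖ ^ 2 / (4 * t) + t :=
      le_of_mul_le_mul_right key (by positivity)
    have h2 : -‖x‖ ^ 2 / (4 * t) - t ≤ -‖x‖ / 2 + -(1/2 * t) := by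
      have hpos : 0 ≤ ‖x‖ ^ 2 / (4 * t) := by positivity
      have hne : -‖x‖ ^ 2 / (4 * t) = -(‖x‖ ^ 2 / (4 * t)) := by ring
      rw [hne]; linarith
    calc t ^ s * Real.exp (-‖x‖ ^ 2 / (4 * t) - t)
        ≤ t ^ s * Real.exp (-‖x‖ / 2 + -(1/2 * t)) :=
          mul_le_mul_of_nonneg_left (Real.exp_le_exp.2 h2) (Real.rpow_nonneg ht0.le _)
      _ = Real.exp (-‖x‖ / 2) * (t ^ s * Real.exp (-(1/2 * t))) := by
          rw [Real.exp_add]; ring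
  -- lower bound for the integral
  set m : ℝ := min 1 (2 ^ s) * Real.exp (-2) with hmdef
  have h2s : (0:ℝ) < 2 ^ s := Real.rpow_pos_of_pos two_pos _
  have hm0 : 0 < m := by
    rw [hmdef]
    exact mul_pos (lt_min one_pos h2s) (Real.exp_pos _)
  have hlower : ∀ x : EuclideanSpace ℝ (Fin d),
      m * Real.exp (-‖x‖ ^ 2 / 4) ≤
        ∫ t in Set.Ioi (0:ℝ), t ^ s * Real.exp (-‖x‖ ^ 2 / (4 * t) - t) := by
    intro x
    have hsub : Set.Ioc (1:ℝ) 2 ⊆ Set.Ioi (0:ℝ) := fun t ht =>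
      lt_trans one_pos ht.1
    have step1 : (∫ t in Set.Ioc (1:ℝ) 2, t ^ s * Real.exp (-‖x‖ ^ 2 / (4 * t) - t)) ≤
        ∫ t in Set.Ioi (0:ℝ), t ^ s * Real.exp (-‖x‖ ^ 2 / (4 * t) - t) := by
      apply setIntegral_mono_set (hgint x) ?_ (HasSubset.Subset.eventuallyLE hsub)
      filter_upwards [self_mem_ae_restrict measurableSet_Ioi] with t ht
      have : (0:ℝ) < t := ht
      positivity
    refine le_trans ?_ step1
    have hvol : (∫ _ in Set.Ioc (1:ℝ) 2, (m * Real.exp (-‖x‖ ^ 2 / 4))) =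
        m * Real.exp (-‖x‖ ^ 2 / 4) := by
      simp [Real.volume_Ioc]; ring
    rw [← hvol]
    apply setIntegral_mono_on (integrableOn_const (by simp [Real.volume_Ioc]))
      ((hgint x).mono_set hsub) measurableSet_Ioc
    intro t ht
    obtain ⟨ht1, ht2⟩ := ht
    have ht0 : (0:ℝ) < t := lt_trans one_pos ht1
    have hts : min 1 (2 ^ s) ≤ t ^ s := by
      rcases le_or_gt 0 s with h | h
      · refine le_trans (min_le_left _ _) ?_
        calc (1:ℝ) = 1 ^ s := (Real.one_rpow s).symm
          _ ≤ t ^ s := Real.rpow_le_rpow zero_le_one ht1.le h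
      · exact le_trans (min_le_right _ _)
          (Real.rpow_le_rpow_of_nonpos ht0 ht2 h.le)
    have hdiv : ‖x‖ ^ 2 / (4 * t) ≤ ‖x‖ ^ 2 / 4 := by
      gcongr
      linarith
    have hexp : Real.exp (-‖x‖ ^ 2 / 4 + -2) ≤ Real.exp (-‖x‖ ^ 2 / (4 * t) - t) := by
      apply Real.exp_le_exp.2
      have h1 : -‖x‖ ^ 2 / (4 * t) = -(‖x‖ ^ 2 / (4 * t)) := by ring
      have h2 : -‖x‖ ^ 2 / 4 = -(‖x‖ ^ 2 / 4) := by ring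
      rw [h1, h2]; linarith
    calc m * Real.exp (-‖x‖ ^ 2 / 4)
        = min 1 (2 ^ s) * Real.exp (-‖x‖ ^ 2 / 4 + -2) := by
          rw [hmdef, Real.exp_add]; ring
      _ ≤ t ^ s * Real.exp (-‖x‖ ^ 2 / (4 * t) - t) := by
          apply mul_le_mul hts hexp (Real.exp_pos _).le (Real.rpow_nonneg ht0.le _)
  -- conclusion
  refine ⟨A * m, A * I2 + 1, mul_pos hA hm0, by positivity, fun x => ?_⟩
  constructor
  · have := hlower x
    show A * m * Real.exp (-‖x‖ ^ 2 / 4) ≤ A * _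
    calc A * m * Real.exp (-‖x‖ ^ 2 / 4)
        = A * (m * Real.exp (-‖x‖ ^ 2 / 4)) := by ring
      _ ≤ A * _ := mul_le_mul_of_nonneg_left this hA.le
  · show A * _ ≤ (A * I2 + 1) * Real.exp (-‖x‖ / 8)
    have h1 : A * _ ≤ A * (Real.exp (-‖x‖ / 2) * I2) :=
      mul_le_mul_of_nonneg_left (hupper x) hA.le
    refine le_trans h1 ?_
    have hee : Real.exp (-‖x‖ / 2) ≤ Real.exp (-‖x‖ / 8) := by
      apply Real.exp_le_exp.2
      have := norm_nonneg x
      linarith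
    calc A * (Real.exp (-‖x‖ / 2) * I2)
        = A * I2 * Real.exp (-‖x‖ / 2) := by ring
      _ ≤ A * I2 * Real.exp (-‖x‖ / 8) :=
          mul_le_mul_of_nonneg_left hee (by positivity)
      _ ≤ (A * I2 + 1) * Real.exp (-‖x‖ / 8) := by
          have := (Real.exp_pos (-‖x‖ / 8)).le
          nlinarith
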